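/- Let F_q be a finite field of odd order, let H = {a² : a ∈ F_q^×} be the subgroup of squares (the unique subgroup of index 2 in F_q^×), and let χ : H → ℂ^× be a nontrivial character. Let χ₁ and χ₂ be the two multiplicative characters of F_q^× extending χ, and let R and S be sets of representatives of the H-orbits of F_q^×. Then the (χ,R,S)-compressed Fourier matrix, with (r,s)-entry Σ_{h∈H} χ(h)ε(hrs), has the nonvanishing minors property if and only if G(χ₁) ≠ G(χ₂) and G(χ₁) ≠ −G(χ₂). -/

import Mathlib

set_option linter.unusedSectionVars false
set_option linter.unnecessarySimpa false


open Complex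

/-- The canonical additive character of a finite field `F` of characteristic `p`:
`ε(x) = exp(2πi·Tr(x)/p)`, where `Tr : F → F_p` is the absolute trace. -/
noncomputable def canonicalAddChar (p : ℕ) [Fact p.Prime] (F : Type*) [Field F]
    [CharP F p] (x : F) : ℂ :=
  letI := ZMod.algebra F p
  Complex.exp (2 * Real.pi * Complex.I * ((Algebra.trace (ZMod p) F x).val : ℕ) / p)

/-- The Gauss sum of a multiplicative character `φ : Fˣ → ℂˣ`:
`G(φ) = Σ_{a ∈ Fˣ} ε(a)φ(a)`. -/
noncomputable def gaussSum' (p : ℕ) [Fact p.Prime] (F : Type*) [Field F] [Fintype F] [DecidableEq F]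
    [CharP F p] (φ : Fˣ →* ℂˣ) : ℂ :=
  ∑ a : Fˣ, canonicalAddChar p F (a : F) * (φ a : ℂ)

/-- `R` is a set of representatives of the orbits of the multiplication action of the
subgroup `H ≤ Fˣ` on the subset `X` of `F`. -/
def IsOrbitReprSet {F : Type*} [Field F] (H : Subgroup Fˣ) (X : Set F)
    (R : Finset F) : Prop :=
  ↑R ⊆ X ∧ ∀ x ∈ X, ∃! r, r ∈ R ∧ ∃ h : H, ((h : Fˣ) : F) * r = x

namespace CFM

noncomputable def expo (p k : ℕ) : ℂ := Complex.exp (2 * Real.pi * Complex.I * k / p)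

lemma expo_add (p a b : ℕ) : expo p (a + b) = expo p a * expo p b := by
  rw [expo, expo, expo, ← Complex.exp_add]
  congr 1
  push_cast
  ring

lemma expo_p_mul (p : ℕ) (hp : p ≠ 0) (m : ℕ) : expo p (p * m) = 1 := by
  have hpc : (p : ℂ) ≠ 0 := Nat.cast_ne_zero.mpr hp
  have : (2 * Real.pi * Complex.I * (p * m : ℕ) / p : ℂ) = (m : ℤ) * (2 * Real.pi * Complex.I) := by
    push_cast
    field_simp
  rw [expo, this, Complex.exp_int_mul_two_pi_mul_I]

lemma expo_mod (p : ℕ) (hp : p ≠ 0) (k : ℕ) : expo p (k % p) = expo p k := by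
  conv_rhs => rw [← Nat.div_add_mod k p]
  rw [expo_add, expo_p_mul p hp, one_mul]

lemma expo_ne_one (p : ℕ) (k : ℕ) (hk : 0 < k) (hkp : k < p) : expo p k ≠ 1 := by
  have hpc : (p : ℂ) ≠ 0 := Nat.cast_ne_zero.mpr (by omega)
  intro h
  rw [expo, Complex.exp_eq_one_iff] at h
  obtain ⟨n, hn⟩ := h
  have h2 : (2 * Real.pi * Complex.I : ℂ) ≠ 0 := by
    simp [Real.pi_ne_zero, Complex.I_ne_zero]
  have hc : (k : ℂ) = n * p := by
    field_simp at hn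
    refine mul_right_cancel₀ h2 ?_
    rw [hn]; ring
  have hk' : (k : ℤ) = n * p := by exact_mod_cast hc
  have hd : (p : ℤ) ∣ (k : ℤ) := ⟨n, by rw [hk']; ring⟩
  exact absurd (Nat.le_of_dvd hk (Int.ofNat_dvd.mp hd)) (by omega)

variable (p : ℕ) [Fact p.Prime] (F : Type*) [Field F] [Fintype F] [DecidableEq F] [CharP F p]

omit [Fintype F] [DecidableEq F] in
lemma canonicalAddChar_eq (x : F) :
    canonicalAddChar p F x
      = expo p (letI := ZMod.algebra F p; (Algebra.trace (ZMod p) F x).val) := rfl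

omit [Fintype F] [DecidableEq F] in
lemma canonicalAddChar_add (a b : F) :
    canonicalAddChar p F (a + b) = canonicalAddChar p F a * canonicalAddChar p F b := by
  letI := ZMod.algebra F p
  have hp : p ≠ 0 := (Fact.out (p := p.Prime)).ne_zero
  simp only [canonicalAddChar_eq, map_add]
  rw [ZMod.val_add, expo_mod p hp, expo_add]

/-- The canonical additive character bundled as an `AddChar`. -/
noncomputable def psiF : AddChar F ℂ where
  toFun := canonicalAddChar p F
  map_zero_eq_one' := by
    letI := ZMod.algebra F p
    rw [canonicalAddChar_eq]
    simp [expo]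
  map_add_eq_mul' := canonicalAddChar_add p F

omit [Fintype F] [DecidableEq F] in
lemma psiF_apply (x : F) : psiF p F x = canonicalAddChar p F x := rfl

omit [DecidableEq F] in
lemma psiF_primitive : (psiF p F).IsPrimitive := by
  letI := ZMod.algebra F p
  apply AddChar.IsPrimitive.of_ne_one
  obtain ⟨b, hb⟩ : ∃ b : F, Algebra.trace (ZMod p) F b ≠ 0 := by
    have htr := (traceForm_nondegenerate (ZMod p) F).1 (1:F)
    simp_rw [Algebra.traceForm_apply] at htr
    by_contra! hf
    exact one_ne_zero (htr (by simpa using hf))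
  intro h
  have hb1 : psiF p F b = 1 := by rw [h]; rfl
  have : expo p ((Algebra.trace (ZMod p) F b).val) ≠ 1 := by
    apply expo_ne_one
    · exact Nat.pos_of_ne_zero fun h0 => hb ((ZMod.val_eq_zero _).mp h0)
    · exact ZMod.val_lt _
  exact this hb1

/-! ### Facts about the subgroup of squares -/

section Squares

variable {F}
variable (H : Subgroup Fˣ) (hH : ∀ u : Fˣ, u ∈ H ↔ ∃ a : Fˣ, a ^ 2 = u)

omit [Fact p.Prime] [CharP F p]
include hH

lemma mem_H_iff_isSquare (u : Fˣ) : u ∈ H ↔ IsSquare (u : F) := by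
  rw [hH]
  constructor
  · rintro ⟨a, rfl⟩
    exact ⟨(a : F), by push_cast [sq]; ring⟩
  · rintro ⟨r, hr⟩
    have hr0 : r ≠ 0 := by
      rintro rfl
      exact u.ne_zero (by simpa using hr)
    refine ⟨Units.mk0 r hr0, Units.ext ?_⟩
    rw [Units.val_pow_eq_pow_val, Units.val_mk0, sq, ← hr]

lemma mem_H_mul_iff (u v : Fˣ) : u * v ∈ H ↔ (u ∈ H ↔ v ∈ H) := by
  rw [mem_H_iff_isSquare H hH, mem_H_iff_isSquare H hH, mem_H_iff_isSquare H hH]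
  have hu : (u : F) ≠ 0 := u.ne_zero
  have hv : (v : F) ≠ 0 := v.ne_zero
  have huv : ((u * v : Fˣ) : F) ≠ 0 := (u * v).ne_zero
  have h1 := quadraticChar_one_iff_isSquare hu
  have h2 := quadraticChar_one_iff_isSquare hv
  have h12 := quadraticChar_one_iff_isSquare huv
  have hm : quadraticChar F ((u * v : Fˣ) : F) = quadraticChar F (u : F) * quadraticChar F (v : F) := by
    push_cast
    exact map_mul _ _ _
  have d1 := quadraticChar_dichotomy hu
  have d2 := quadraticChar_dichotomy hv
  rw [← h1, ← h2, ← h12, hm]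
  rcases d1 with e1 | e1 <;> rcases d2 with e2 | e2 <;> rw [e1, e2] <;> norm_num

lemma orbit_iff_units (x y : Fˣ) :
    (∃ h : H, (h : Fˣ) * y = x) ↔ (x ∈ H ↔ y ∈ H) := by
  constructor
  · rintro ⟨⟨h, hh⟩, rfl⟩
    simpa [Subgroup.mul_mem_cancel_left H hh] using (iff_of_eq rfl)
  · intro hpar
    have hmem : x * y⁻¹ ∈ H := by
      rw [mem_H_mul_iff H hH, Subgroup.inv_mem_iff]
      exact hpar
    exact ⟨⟨x * y⁻¹, hmem⟩, by group⟩

lemma orbit_iff (x y : F) (hx : x ≠ 0) (hy : y ≠ 0) :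
    (∃ h : H, ((h : Fˣ) : F) * y = x) ↔ (IsSquare x ↔ IsSquare y) := by
  have := orbit_iff_units H hH (Units.mk0 x hx) (Units.mk0 y hy)
  rw [mem_H_iff_isSquare H hH, mem_H_iff_isSquare H hH] at this
  simp only [Units.val_mk0] at this
  rw [← this]
  constructor
  · rintro ⟨h, hh⟩
    exact ⟨h, Units.ext (by simpa using hh)⟩
  · rintro ⟨h, hh⟩
    refine ⟨h, ?_⟩
    have := congrArg (Units.val) hh
    simpa using this

variable {H}
variable {R : Finset F} (hR : IsOrbitReprSet H {x : F | x ≠ 0} R)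
include hR

omit hH in
lemma repr_ne_zero {r : F} (hr : r ∈ R) : r ≠ 0 := hR.1 hr

lemma repr_eq {r r' : F} (hr : r ∈ R) (hr' : r' ∈ R)
    (hpar : IsSquare r ↔ IsSquare r') : r = r' := by
  have h0 : r ≠ 0 := repr_ne_zero hR hr
  have h0' : r' ≠ 0 := repr_ne_zero hR hr'
  obtain ⟨w, -, hw⟩ := hR.2 r h0
  have e1 : r = w := hw r ⟨hr, ⟨1, by simp⟩⟩
  have e2 : r' = w := hw r' ⟨hr', (orbit_iff H hH r r' h0 h0').mpr hpar⟩
  rw [e1, e2]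

lemma repr_exists (x : F) (hx : x ≠ 0) :
    ∃ r ∈ R, (IsSquare r ↔ IsSquare x) := by
  obtain ⟨r, ⟨hrR, horb⟩, -⟩ := hR.2 x hx
  refine ⟨r, hrR, ?_⟩
  exact ((orbit_iff H hH x r hx (repr_ne_zero hR hrR)).mp horb).symm

end Squares

/-! ### Sums over units, Gauss sum bridge -/

variable {F}

lemma sum_units (g : F → ℂ) (h0 : g 0 = 0) : ∑ a : F, g a = ∑ u : Fˣ, g u := by
  classical
  have h1 : ∑ a ∈ Finset.univ.filter (fun x : F => x ≠ 0), g a = ∑ a : F, g a := by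
    apply Finset.sum_filter_of_ne
    intro x _ hx
    intro hx0
    rw [hx0] at hx
    exact hx h0
  have h2 : ∑ a ∈ Finset.univ.filter (fun x : F => x ≠ 0), g a
      = ∑ a : {x : F // x ≠ 0}, g a := by
    apply Finset.sum_subtype
    intro x
    simp
  rw [← h1, h2]
  have := Equiv.sum_comp (unitsEquivNeZero (G₀ := F)) (fun a : {x : F // x ≠ 0} => g a)
  rw [← this]
  simp

lemma gauss_bridge (χ' : Fˣ →* ℂˣ) :
    gaussSum' p F χ' = gaussSum (MulChar.ofUnitHom χ') (psiF p F) := by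
  rw [gaussSum', gaussSum]
  rw [sum_units (fun a : F => MulChar.ofUnitHom χ' a * psiF p F a)
    (by simp [MulChar.map_nonunit])]
  apply Finset.sum_congr rfl
  intro u _
  rw [MulChar.ofUnitHom_coe, psiF_apply, mul_comm]

lemma shift_sum (χ' : Fˣ →* ℂˣ) (x : Fˣ) :
    ∑ a : Fˣ, canonicalAddChar p F ((x * a : Fˣ) : F) * (χ' a : ℂ)
      = ((χ' x : ℂ))⁻¹ * gaussSum' p F χ' := by
  rw [gaussSum', Finset.mul_sum]
  refine Fintype.sum_equiv (Equiv.mulLeft x) _ _ fun a => ?_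
  simp only [Equiv.coe_mulLeft]
  rw [map_mul]
  push_cast
  have hx : (χ' x : ℂ) ≠ 0 := Units.ne_zero _
  field_simp

section EntryLemma

variable (H : Subgroup Fˣ) [Fintype H] (hH : ∀ u : Fˣ, u ∈ H ↔ ∃ a : Fˣ, a ^ 2 = u)
variable (χ : H →* ℂˣ) (χ₁ χ₂ : Fˣ →* ℂˣ)
variable (hχ₁ : ∀ h : H, χ₁ (h : Fˣ) = χ h) (hχ₂ : ∀ h : H, χ₂ (h : Fˣ) = χ h)
variable (hne : χ₁ ≠ χ₂)

omit [Fact p.Prime] [Fintype F] [DecidableEq F] [CharP F p] in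
include hχ₁ hχ₂ in
lemma chi_eq_on_H (v : Fˣ) (hv : v ∈ H) : χ₂ v = χ₁ v := by
  have h1 := hχ₁ ⟨v, hv⟩
  have h2 := hχ₂ ⟨v, hv⟩
  simp only at h1 h2
  rw [h1, h2]

omit [Fact p.Prime] [CharP F p] in
include hH hχ₁ hχ₂ hne in
lemma chi2_eq_neg (u : Fˣ) (hu : u ∉ H) : (χ₂ u : ℂ) = -(χ₁ u : ℂ) := by
  have hsq : u ^ 2 ∈ H := (hH _).mpr ⟨u, rfl⟩
  have h12 : χ₁ (u ^ 2) = χ₂ (u ^ 2) :=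
    (hχ₁ ⟨u ^ 2, hsq⟩).trans (hχ₂ ⟨u ^ 2, hsq⟩).symm
  have hsq' : (χ₂ u : ℂ) * (χ₂ u : ℂ) = (χ₁ u : ℂ) * (χ₁ u : ℂ) := by
    have := congrArg (fun w : ℂˣ => (w : ℂ)) h12
    simp only [map_pow] at this
    push_cast at this
    rw [sq, sq] at this
    exact this.symm
  rcases mul_self_eq_mul_self_iff.mp hsq' with hc | hc
  · exfalso
    apply hne
    have hcu : χ₁ u = χ₂ u := Units.ext (by exact_mod_cast hc.symm)
    ext v
    by_cases hv : v ∈ H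
    · rw [chi_eq_on_H H χ χ₁ χ₂ hχ₁ hχ₂ v hv]
    · have hmem : v * u⁻¹ ∈ H := by
        rw [mem_H_mul_iff H hH, Subgroup.inv_mem_iff]
        constructor
        · intro h; exact absurd h hv
        · intro h; exact absurd h hu
      have hv' : v = (v * u⁻¹) * u := by group
      have h3 : χ₂ (v * u⁻¹) = χ₁ (v * u⁻¹) := chi_eq_on_H H χ χ₁ χ₂ hχ₁ hχ₂ _ hmem
      have e1 : χ₁ v = χ₁ (v * u⁻¹) * χ₁ u := by rw [← map_mul, inv_mul_cancel_right]
      have e2 : χ₂ v = χ₂ (v * u⁻¹) * χ₂ u := by rw [← map_mul, inv_mul_cancel_right]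
      have hfin : χ₁ v = χ₂ v := by rw [e1, e2, h3, hcu]
      rw [hfin]
  · exact hc

include hH hχ₁ hχ₂ hne in
open scoped Classical in
lemma entry_value (x : Fˣ) :
    ∑ h : H, (χ h : ℂ) * canonicalAddChar p F (((h : Fˣ) : F) * (x : F))
      = ((χ₁ x : ℂ))⁻¹ *
        (if x ∈ H then (gaussSum' p F χ₁ + gaussSum' p F χ₂) / 2
         else (gaussSum' p F χ₁ - gaussSum' p F χ₂) / 2) := by
  classical
  set L := ∑ h : H, (χ h : ℂ) * canonicalAddChar p F (((h : Fˣ) : F) * (x : F)) with hL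
  set T : Fˣ → ℂ := fun a => canonicalAddChar p F ((x * a : Fˣ) : F) * ((χ₁ a : ℂ) + (χ₂ a : ℂ))
    with hT
  have hTsum : ∑ a : Fˣ, T a = ∑ h : H, T h := by
    have h1 : ∑ a ∈ Finset.univ.filter (fun a : Fˣ => a ∈ H), T a = ∑ a : Fˣ, T a := by
      apply Finset.sum_filter_of_ne
      intro a _ ha
      by_contra hmem
      apply ha
      rw [hT]
      simp only
      rw [chi2_eq_neg H hH χ χ₁ χ₂ hχ₁ hχ₂ hne a hmem]
      ring
    have h2 : ∑ a ∈ Finset.univ.filter (fun a : Fˣ => a ∈ H), T a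
        = ∑ h : H, T h := by
      apply Finset.sum_subtype
      intro a
      simp [SetLike.mem_coe]
    rw [← h1, h2]
  have hsplit : ∑ a : Fˣ, T a
      = (χ₁ x : ℂ)⁻¹ * gaussSum' p F χ₁ + (χ₂ x : ℂ)⁻¹ * gaussSum' p F χ₂ := by
    rw [← shift_sum p χ₁ x, ← shift_sum p χ₂ x, ← Finset.sum_add_distrib]
    apply Finset.sum_congr rfl
    intro a _
    rw [hT]
    ring
  have hsub : ∑ h : H, T h = 2 * L := by
    rw [hL, Finset.mul_sum]
    apply Finset.sum_congr rfl
    intro h _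
    rw [hT]
    simp only
    rw [chi_eq_on_H H χ χ₁ χ₂ hχ₁ hχ₂ _ h.2, hχ₁ h]
    have harg : ((x * (h : Fˣ) : Fˣ) : F) = ((h : Fˣ) : F) * (x : F) := by
      push_cast; ring
    rw [harg]
    ring
  have key : 2 * L = (χ₁ x : ℂ)⁻¹ * gaussSum' p F χ₁ + (χ₂ x : ℂ)⁻¹ * gaussSum' p F χ₂ := by
    rw [← hsub, ← hTsum, hsplit]
  by_cases hx : x ∈ H
  · have hc : (χ₂ x : ℂ) = (χ₁ x : ℂ) := by
      rw [chi_eq_on_H H χ χ₁ χ₂ hχ₁ hχ₂ x hx]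
    rw [hc] at key
    rw [if_pos hx]
    linear_combination key / 2
  · have hc : (χ₂ x : ℂ) = -(χ₁ x : ℂ) := chi2_eq_neg H hH χ χ₁ χ₂ hχ₁ hχ₂ hne x hx
    rw [hc, inv_neg] at key
    rw [if_neg hx]
    linear_combination key / 2

include hχ₁ in
omit [Fact p.Prime] [Fintype F] [DecidableEq F] [CharP F p] in
lemma chi1_nontrivial (hχ : χ ≠ 1) : ∃ u : Fˣ, χ₁ u ≠ 1 := by
  by_contra! hall
  apply hχ
  ext h0
  rw [← hχ₁ h0, hall]
  rfl

lemma mulchar_ne_one (χ' : Fˣ →* ℂˣ) (hnt : ∃ u : Fˣ, χ' u ≠ 1) :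
    MulChar.ofUnitHom χ' ≠ 1 := by
  obtain ⟨u, hu⟩ := hnt
  intro he
  apply hu
  apply Units.ext
  have h1 : MulChar.ofUnitHom χ' (u : F) = ((χ' u : ℂˣ) : ℂ) := MulChar.ofUnitHom_coe χ' u
  rw [he, MulChar.one_apply_coe] at h1
  exact h1.symm

lemma gauss_ne_zero (χ' : Fˣ →* ℂˣ) (hnt : ∃ u : Fˣ, χ' u ≠ 1) :
    gaussSum' p F χ' ≠ 0 := by
  rw [gauss_bridge]
  apply gaussSum_ne_zero_of_nontrivial
  · exact_mod_cast Nat.cast_ne_zero.mpr (Fintype.card_ne_zero (α := F))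
  · exact mulchar_ne_one χ' hnt
  · exact psiF_primitive p F

end EntryLemma

end CFM

lemma CFM.iff_trans_aux {P Q R' : Prop} (h1 : ¬(P ↔ Q)) (h2 : ¬(P ↔ R')) : Q ↔ R' := by tauto

lemma CFM.iff_aux1 {a b c d : Prop} (h1 : ¬(a ↔ b)) (h2 : ¬(c ↔ d)) (h : a ↔ c) : b ↔ d := by
  tauto

lemma CFM.iff_aux2 {a c d : Prop} (h2 : ¬(c ↔ d)) (h : a ↔ c) (h' : a ↔ d) : False := by tauto

lemma CFM.iff_aux3 {a b c : Prop} (h1 : ¬(a ↔ b)) (h : a ↔ c) (h' : b ↔ c) : False := by tauto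

lemma CFM.iff_aux6 {a b c d : Prop} (h1 : ¬(a ↔ b)) (h2 : ¬(c ↔ d)) (h3 : ¬(a ↔ c))
    (h4 : b ↔ d) : False := by tauto

set_option maxHeartbeats 1000000 in
/-- Let `F_q` be a finite field of odd order, `H` the subgroup of squares in `F_q^×`,
`χ : H → ℂ^×` a nontrivial character, and `χ₁, χ₂` the two multiplicative characters of
`F_q^×` extending `χ`.  Then the `(χ,R,S)`-compressed Fourier matrix, with `(r,s)`-entry
`Σ_{h∈H} χ(h)ε(hrs)`, has the nonvanishing minors property if and only if
`G(χ₁) ≠ G(χ₂)` and `G(χ₁) ≠ -G(χ₂)`. -/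
theorem squares_compressed_fourier_nonvanishing_minors_iff (p : ℕ) [Fact p.Prime]
    (F : Type*) [Field F] [Fintype F] [DecidableEq F] [CharP F p] (hodd : Odd (Fintype.card F))
    (H : Subgroup Fˣ) [Fintype H] (hH : ∀ u : Fˣ, u ∈ H ↔ ∃ a : Fˣ, a ^ 2 = u)
    (χ : H →* ℂˣ) (hχ : χ ≠ 1)
    (χ₁ χ₂ : Fˣ →* ℂˣ) (hχ₁ : ∀ h : H, χ₁ (h : Fˣ) = χ h)
    (hχ₂ : ∀ h : H, χ₂ (h : Fˣ) = χ h) (hne : χ₁ ≠ χ₂)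
    (R S : Finset F)
    (hR : IsOrbitReprSet H {x : F | x ≠ 0} R)
    (hS : IsOrbitReprSet H {x : F | x ≠ 0} S) :
    (∀ (k : ℕ) (ri : Fin k → R) (ci : Fin k → S),
      Function.Injective ri → Function.Injective ci →
      (Matrix.of fun i j : Fin k =>
        ∑ h : H, (χ h : ℂ) *
          canonicalAddChar p F (((h : Fˣ) : F) * (ri i : F) * (ci j : F))).det ≠ 0)
    ↔ (gaussSum' p F χ₁ ≠ gaussSum' p F χ₂ ∧ gaussSum' p F χ₁ ≠ -gaussSum' p F χ₂) := by
  classical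
  open CFM in
  -- abbreviations
  set G₁ := gaussSum' p F χ₁ with hG₁def
  set G₂ := gaussSum' p F χ₂ with hG₂def
  set A := (G₁ + G₂) / 2 with hAdef
  set B := (G₁ - G₂) / 2 with hBdef
  -- Gauss sums are nonzero
  have hnt1 : ∃ u : Fˣ, χ₁ u ≠ 1 := CFM.chi1_nontrivial H χ χ₁ hχ₁ hχ
  have hnt2 : ∃ u : Fˣ, χ₂ u ≠ 1 := CFM.chi1_nontrivial H χ χ₂ hχ₂ hχ
  have hG1 : G₁ ≠ 0 := CFM.gauss_ne_zero p χ₁ hnt1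
  have hG2 : G₂ ≠ 0 := CFM.gauss_ne_zero p χ₂ hnt2
  -- there exists a nonsquare
  have hp2 : ringChar F ≠ 2 := by
    obtain ⟨n, hp, hcard⟩ := FiniteField.card F p
    intro h2
    rw [ringChar.eq F p] at h2
    rw [h2] at hcard
    rw [hcard] at hodd
    exact (Nat.not_odd_iff_even.mpr (Nat.even_pow.mpr ⟨even_iff_two_dvd.mpr dvd_rfl, n.2.ne'⟩)) hodd
  obtain ⟨a, hans⟩ := FiniteField.exists_nonsquare hp2
  have ha0 : a ≠ 0 := by rintro rfl; exact hans ⟨0, (mul_zero 0).symm⟩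
  -- representative structure
  obtain ⟨rp, hrpR, hrp⟩ := CFM.repr_exists hH hR (1 : F) one_ne_zero
  obtain ⟨rn, hrnR, hrn⟩ := CFM.repr_exists hH hR a ha0
  obtain ⟨sp, hspS, hsp⟩ := CFM.repr_exists hH hS (1 : F) one_ne_zero
  obtain ⟨sn, hsnS, hsn⟩ := CFM.repr_exists hH hS a ha0
  have hrpsq : IsSquare rp := hrp.mpr IsSquare.one
  have hrnsq : ¬IsSquare rn := fun h => hans (hrn.mp h)
  have hspsq : IsSquare sp := hsp.mpr IsSquare.one
  have hsnsq : ¬IsSquare sn := fun h => hans (hsn.mp h)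
  have hrp0 : rp ≠ 0 := CFM.repr_ne_zero hR hrpR
  have hrn0 : rn ≠ 0 := CFM.repr_ne_zero hR hrnR
  have hsp0 : sp ≠ 0 := CFM.repr_ne_zero hS hspS
  have hsn0 : sn ≠ 0 := CFM.repr_ne_zero hS hsnS
  -- the entry formula
  have ent := CFM.entry_value p H hH χ χ₁ χ₂ hχ₁ hχ₂ hne
  have hentry : ∀ (r s : F) (hr0 : r ≠ 0) (hs0 : s ≠ 0),
      ∑ h : H, (χ h : ℂ) * canonicalAddChar p F (((h : Fˣ) : F) * r * s)
        = ((χ₁ (Units.mk0 r hr0 * Units.mk0 s hs0) : ℂ))⁻¹ *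
          (if Units.mk0 r hr0 * Units.mk0 s hs0 ∈ H then A else B) := by
    intro r s hr0 hs0
    have h := ent (Units.mk0 r hr0 * Units.mk0 s hs0)
    rw [← hG₁def, ← hG₂def, ← hAdef, ← hBdef] at h
    rw [← h]
    apply Finset.sum_congr rfl
    intro x _
    congr 1
    simp only [Units.val_mul, Units.val_mk0, mul_assoc]
  -- membership of products in H
  have hmemiff : ∀ (r s : F) (hr0 : r ≠ 0) (hs0 : s ≠ 0),
      (Units.mk0 r hr0 * Units.mk0 s hs0 ∈ H) ↔ (IsSquare r ↔ IsSquare s) := by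
    intro r s hr0 hs0
    rw [CFM.mem_H_mul_iff H hH, CFM.mem_H_iff_isSquare H hH, CFM.mem_H_iff_isSquare H hH]
    simp
  constructor
  · -- minors property ⇒ Gauss sum conditions
    intro hmin
    constructor
    · -- G₁ ≠ G₂; use a square row rep and a nonsquare column rep
      intro heq
      have hB0 : B = 0 := by rw [hBdef, heq]; simp
      have hdet := hmin 1 (fun _ => ⟨rp, hrpR⟩) (fun _ => ⟨sn, hsnS⟩)
        (fun a b _ => Subsingleton.elim a b) (fun a b _ => Subsingleton.elim a b)
      rw [Matrix.det_fin_one] at hdet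
      apply hdet
      simp only [Matrix.of_apply]
      rw [hentry rp sn hrp0 hsn0]
      rw [if_neg (fun hm => (iff_of_true hrpsq ((hmemiff rp sn hrp0 hsn0).mp hm |>.mp hrpsq)).mp
        hrpsq |> fun _ => ((hmemiff rp sn hrp0 hsn0).mp hm |>.mp hrpsq |> hsnsq))]
      rw [hB0, mul_zero]
    · -- G₁ ≠ -G₂; use square row and column reps
      intro heq
      have hA0 : A = 0 := by rw [hAdef, heq]; simp
      have hdet := hmin 1 (fun _ => ⟨rp, hrpR⟩) (fun _ => ⟨sp, hspS⟩)
        (fun a b _ => Subsingleton.elim a b) (fun a b _ => Subsingleton.elim a b)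
      rw [Matrix.det_fin_one] at hdet
      apply hdet
      simp only [Matrix.of_apply]
      rw [hentry rp sp hrp0 hsp0]
      rw [if_pos ((hmemiff rp sp hrp0 hsp0).mpr (iff_of_true hrpsq hspsq))]
      rw [hA0, mul_zero]
  · -- Gauss sum conditions ⇒ minors property
    rintro ⟨h1, h2⟩ k ri ci hri hci
    have hA : A ≠ 0 := by
      rw [hAdef]
      intro h
      rcases div_eq_zero_iff.mp h with h' | h'
      · exact h2 (eq_neg_of_add_eq_zero_left h')
      · norm_num at h'
    have hB : B ≠ 0 := by
      rw [hBdef]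
      intro h
      rcases div_eq_zero_iff.mp h with h' | h'
      · exact h1 (sub_eq_zero.mp h')
      · norm_num at h'
    have hparR : ∀ i j : Fin k, (IsSquare ((ri i : F)) ↔ IsSquare ((ri j : F))) → i = j :=
      fun i j hij => hri (Subtype.ext (CFM.repr_eq hH hR (ri i).2 (ri j).2 hij))
    have hparS : ∀ i j : Fin k, (IsSquare ((ci i : F)) ↔ IsSquare ((ci j : F))) → i = j :=
      fun i j hij => hci (Subtype.ext (CFM.repr_eq hH hS (ci i).2 (ci j).2 hij))
    have hri0 : ∀ i, ((ri i : F)) ≠ 0 := fun i => CFM.repr_ne_zero hR (ri i).2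
    have hci0 : ∀ i, ((ci i : F)) ≠ 0 := fun i => CFM.repr_ne_zero hS (ci i).2
    have hk2 : k ≤ 2 := by
      by_contra hk
      push_neg at hk
      have h3 : 3 ≤ k := hk
      set i0 : Fin k := ⟨0, by omega⟩ with hi0
      set i1 : Fin k := ⟨1, by omega⟩ with hi1
      set i2 : Fin k := ⟨2, by omega⟩ with hi2
      have d01 : i0 ≠ i1 := by simp [hi0, hi1, Fin.ext_iff]
      have d02 : i0 ≠ i2 := by simp [hi0, hi2, Fin.ext_iff]
      have d12 : i1 ≠ i2 := by simp [hi1, hi2, Fin.ext_iff]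
      by_cases p01 : IsSquare ((ri i0 : F)) ↔ IsSquare ((ri i1 : F))
      · exact d01 (hparR _ _ p01)
      by_cases p02 : IsSquare ((ri i0 : F)) ↔ IsSquare ((ri i2 : F))
      · exact d02 (hparR _ _ p02)
      exact d12 (hparR _ _ (CFM.iff_trans_aux p01 p02))
    obtain _ | _ | _ | k := k
    pick_goal 4
    · omega
    · -- k = 0
      rw [Matrix.det_fin_zero]
      exact one_ne_zero
    · -- k = 1
      rw [Matrix.det_fin_one]
      simp only [Matrix.of_apply]
      rw [hentry _ _ (hri0 0) (hci0 0)]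
      apply mul_ne_zero
      · exact inv_ne_zero (Units.ne_zero _)
      · split
        · exact hA
        · exact hB
    · -- k = 2
      rw [Matrix.det_fin_two]
      simp only [Matrix.of_apply]
      rw [hentry _ _ (hri0 0) (hci0 0), hentry _ _ (hri0 0) (hci0 1),
        hentry _ _ (hri0 1) (hci0 0), hentry _ _ (hri0 1) (hci0 1)]
      set u0 := Units.mk0 ((ri 0 : F)) (hri0 0) with hu0
      set u1 := Units.mk0 ((ri 1 : F)) (hri0 1) with hu1
      set v0 := Units.mk0 ((ci 0 : F)) (hci0 0) with hv0
      set v1 := Units.mk0 ((ci 1 : F)) (hci0 1) with hv1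
      have hRdiff : ¬(IsSquare ((ri 0 : F)) ↔ IsSquare ((ri 1 : F))) := by
        intro h
        have := hparR 0 1 h
        simp [Fin.ext_iff] at this
      have hSdiff : ¬(IsSquare ((ci 0 : F)) ↔ IsSquare ((ci 1 : F))) := by
        intro h
        have := hparS 0 1 h
        simp [Fin.ext_iff] at this
      have m00 := hmemiff _ _ (hri0 0) (hci0 0)
      have m01 := hmemiff _ _ (hri0 0) (hci0 1)
      have m10 := hmemiff _ _ (hri0 1) (hci0 0)
      have m11 := hmemiff _ _ (hri0 1) (hci0 1)
      have hprodx : u0 * v0 * (u1 * v1) = u0 * v1 * (u1 * v0) := by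
        rw [mul_mul_mul_comm, mul_mul_mul_comm u0 v1, mul_comm v1 v0]
      have hprodc : (χ₁ (u0 * v0) : ℂ) * (χ₁ (u1 * v1) : ℂ)
          = (χ₁ (u0 * v1) : ℂ) * (χ₁ (u1 * v0) : ℂ) := by
        have : χ₁ (u0 * v0) * χ₁ (u1 * v1) = χ₁ (u0 * v1) * χ₁ (u1 * v0) := by
          rw [← map_mul, ← map_mul, hprodx]
        exact_mod_cast congrArg (fun w : ℂˣ => (w : ℂ)) this
      set c1 := (χ₁ (u0 * v0) : ℂ) with hc1
      set c2 := (χ₁ (u1 * v1) : ℂ) with hc2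
      set c3 := (χ₁ (u0 * v1) : ℂ) with hc3
      set c4 := (χ₁ (u1 * v0) : ℂ) with hc4
      have hc10 : c1 ≠ 0 := Units.ne_zero _
      have hc20 : c2 ≠ 0 := Units.ne_zero _
      have hc30 : c3 ≠ 0 := Units.ne_zero _
      have hc40 : c4 ≠ 0 := Units.ne_zero _
      have hinv : c3⁻¹ * c4⁻¹ = c1⁻¹ * c2⁻¹ := by
        rw [← mul_inv, ← mul_inv, hprodc]
      have hABG : A * A - B * B = G₁ * G₂ := by
        rw [hAdef, hBdef]; ring
      by_cases hx : u0 * v0 ∈ H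
      · have hac := m00.mp hx
        have hx11 : u1 * v1 ∈ H := m11.mpr (CFM.iff_aux1 hRdiff hSdiff hac)
        have hx01 : u0 * v1 ∉ H := fun hm => CFM.iff_aux2 hSdiff hac (m01.mp hm)
        have hx10 : u1 * v0 ∉ H := fun hm => CFM.iff_aux3 hRdiff hac (m10.mp hm)
        rw [if_pos hx, if_pos hx11, if_neg hx01, if_neg hx10]
        have hexp : c1⁻¹ * A * (c2⁻¹ * A) - c3⁻¹ * B * (c4⁻¹ * B)
            = (c1⁻¹ * c2⁻¹) * (A * A - B * B) := by
          have : c1⁻¹ * A * (c2⁻¹ * A) - c3⁻¹ * B * (c4⁻¹ * B)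
              = (c1⁻¹ * c2⁻¹) * (A * A) - (c3⁻¹ * c4⁻¹) * (B * B) := by ring
          rw [this, hinv]
          ring
        rw [hexp, hABG]
        exact mul_ne_zero (mul_ne_zero (inv_ne_zero hc10) (inv_ne_zero hc20))
          (mul_ne_zero hG1 hG2)
      · have hnac : ¬(IsSquare ((ri 0 : F)) ↔ IsSquare ((ci 0 : F))) := fun h => hx (m00.mpr h)
        have hx11 : u1 * v1 ∉ H := fun hm => CFM.iff_aux6 hRdiff hSdiff hnac (m11.mp hm)
        have hx01 : u0 * v1 ∈ H := m01.mpr (CFM.iff_trans_aux hSdiff (fun h => hnac h.symm)).symm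
        have hx10 : u1 * v0 ∈ H := m10.mpr (CFM.iff_trans_aux hRdiff hnac)
        rw [if_neg hx, if_neg hx11, if_pos hx01, if_pos hx10]
        have hexp : c1⁻¹ * B * (c2⁻¹ * B) - c3⁻¹ * A * (c4⁻¹ * A)
            = -((c1⁻¹ * c2⁻¹) * (A * A - B * B)) := by
          have : c1⁻¹ * B * (c2⁻¹ * B) - c3⁻¹ * A * (c4⁻¹ * A)
              = (c1⁻¹ * c2⁻¹) * (B * B) - (c3⁻¹ * c4⁻¹) * (A * A) := by ring
          rw [this, hinv]
          ring
        rw [hexp, hABG]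
        exact neg_ne_zero.mpr (mul_ne_zero (mul_ne_zero (inv_ne_zero hc10) (inv_ne_zero hc20))
          (mul_ne_zero hG1 hG2))
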